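/- Let U be a critical two-dimensional update family with difficulty α, let u ∈ S¹ be a rational direction with α(u) ≤ α, and let Z be voracious with respect to u. Then [H_u ∪ Z] ∩ ℓ_u is semi-periodic, i.e. there exist a ∈ ℓ_u and k ∈ ℕ such that a + k·ℓ_u⁺ ⊆ [H_u ∪ Z] ∩ ℓ_u or a + k·ℓ_u⁻ ⊆ [H_u ∪ Z] ∩ ℓ_u. -/

import Mathlib

open MeasureTheory Filter Set

namespace BP

/-- A site of the two-dimensional lattice `ℤ²`. -/
abbrev Site := ℤ × ℤ

/-- One step of the `U`-bootstrap process: a site becomes infected if some update rule,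
translated by it, is already entirely infected. -/
def step (U : Finset (Finset Site)) (A : Set Site) : Set Site :=
  A ∪ {x : Site | ∃ X ∈ U, ∀ y ∈ X, x + y ∈ A}

/-- The sets `A_t` of the `U`-bootstrap process. -/
def iter (U : Finset (Finset Site)) (A : Set Site) : ℕ → Set Site
  | 0 => A
  | t + 1 => step U (iter U A t)

/-- The closure `[A]` of `A` under the `U`-bootstrap process. -/
def bclosure (U : Finset (Finset Site)) (A : Set Site) : Set Site :=
  ⋃ t : ℕ, iter U A t

/-- The inner product of a site with a real vector. -/
noncomputable def ip (x : Site) (u : ℝ × ℝ) : ℝ := (x.1 : ℝ) * u.1 + (x.2 : ℝ) * u.2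

/-- The inner product of two real vectors. -/
noncomputable def ipR (v w : ℝ × ℝ) : ℝ := v.1 * w.1 + v.2 * w.2

/-- `u` is a unit vector, i.e. an element of `S¹`. -/
def unitVec (u : ℝ × ℝ) : Prop := u.1 ^ 2 + u.2 ^ 2 = 1

/-- The discrete half-plane `H_u = {x : ⟨x,u⟩ < 0}`. -/
def halfPlane (u : ℝ × ℝ) : Set Site := {x : Site | ip x u < 0}

/-- `u` is a stable direction for `U`: the half-plane `H_u` is closed under the process. -/
def IsStable (U : Finset (Finset Site)) (u : ℝ × ℝ) : Prop :=
  bclosure U (halfPlane u) = halfPlane u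

/-- The stable set `S = S(U)`, as a set of unit vectors. -/
def stableSet (U : Finset (Finset Site)) : Set (ℝ × ℝ) :=
  {u | unitVec u ∧ IsStable U u}

/-- The discrete line `ℓ_u` through the origin perpendicular to `u`. -/
def line (u : ℝ × ℝ) : Set Site := {x | ip x u = 0}

/-- The perpendicular vector pointing to the right as one looks in the direction `u`. -/
def rightPerp (u : ℝ × ℝ) : ℝ × ℝ := (u.2, -u.1)

/-- `ℓ_u⁺`: the origin together with the sites of `ℓ_u` to the right of the origin
(as one looks in the direction `u`). -/
def linePlus (u : ℝ × ℝ) : Set Site := {x | ip x u = 0 ∧ 0 ≤ ip x (rightPerp u)}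

/-- `ℓ_u⁻`: the origin together with the sites of `ℓ_u` to the left of the origin. -/
def lineMinus (u : ℝ × ℝ) : Set Site := {x | ip x u = 0 ∧ ip x (rightPerp u) ≤ 0}

/-- `α⁺(u)`: the minimum cardinality of a finite set `Z ⊆ ℤ²` such that `[H_u ∪ Z]`
contains infinitely many sites of `ℓ_u⁺` (and `⊤ = ∞` if there is no such set). -/
noncomputable def alphaPlus (U : Finset (Finset Site)) (u : ℝ × ℝ) : ℕ∞ :=
  sInf {n : ℕ∞ | ∃ Z : Finset Site, (Z.card : ℕ∞) = n ∧
    (bclosure U (halfPlane u ∪ ↑Z) ∩ linePlus u).Infinite}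

/-- `α⁻(u)`: as `α⁺(u)`, but for `ℓ_u⁻`. -/
noncomputable def alphaMinus (U : Finset (Finset Site)) (u : ℝ × ℝ) : ℕ∞ :=
  sInf {n : ℕ∞ | ∃ Z : Finset Site, (Z.card : ℕ∞) = n ∧
    (bclosure U (halfPlane u ∪ ↑Z) ∩ lineMinus u).Infinite}

/-- The difficulty `α(u)` of a direction `u`: `min {α⁺(u), α⁻(u)}` if both are finite,
and `∞` otherwise. -/
noncomputable def difficulty (U : Finset (Finset Site)) (u : ℝ × ℝ) : ℕ∞ :=
  if alphaPlus U u ≠ ⊤ ∧ alphaMinus U u ≠ ⊤ then min (alphaPlus U u) (alphaMinus U u)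
  else ⊤

/-- `ᾱ(u) = min {α⁺(u), α⁻(u)}`. -/
noncomputable def alphaBar (U : Finset (Finset Site)) (u : ℝ × ℝ) : ℕ∞ :=
  min (alphaPlus U u) (alphaMinus U u)

/-- The difficulty `α = α(U)` of the update family `U`: the minimum over open
semicircles `C` of the maximum of `α(u)` over `u ∈ C`.  (An open semicircle is
parametrised by its midpoint `w`.) -/
noncomputable def famDifficulty (U : Finset (Finset Site)) : ℕ∞ :=
  ⨅ (w : ℝ × ℝ) (_ : unitVec w),
    ⨆ (u : ℝ × ℝ) (_ : unitVec u) (_ : 0 < ipR u w), difficulty U u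

/-- `U` is critical: some (closed) semicircle has finite intersection with the stable
set, and every open semicircle meets the stable set. -/
def Critical (U : Finset (Finset Site)) : Prop :=
  (∃ w : ℝ × ℝ, unitVec w ∧ (stableSet U ∩ {u | 0 ≤ ipR u w}).Finite) ∧
  (∀ w : ℝ × ℝ, unitVec w → (stableSet U ∩ {u | 0 < ipR u w}).Nonempty)

/-- The balancedness condition: some closed semicircle `C` has `α(u) ≤ α(U)`
for every `u ∈ C`.  A critical family is balanced iff this holds, unbalanced otherwise. -/
def BalancedCond (U : Finset (Finset Site)) : Prop :=
  ∃ w : ℝ × ℝ, unitVec w ∧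
    ∀ u : ℝ × ℝ, unitVec u → 0 ≤ ipR u w → difficulty U u ≤ famDifficulty U

/-- The time `τ` at which the origin is infected (`⊤ = ∞` if it never is). -/
noncomputable def tau (U : Finset (Finset Site)) (A : Set Site) : ℕ∞ :=
  ⨅ (t : ℕ) (_ : (0 : Site) ∈ iter U A t), (t : ℕ∞)

/-- Configurations of initially infected sites in the plane. -/
abbrev Config := Site → Bool

/-- The set of initially infected sites of a configuration. -/
def initSet (ω : Config) : Set Site := {x | ω x = true}

/-- `μ` is the product Bernoulli(`p`) measure (law of a "`p`-random set"): a probability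
measure giving every cylinder event its product probability. -/
def IsBernoulliProduct {ι : Type*} (p : ℝ) (μ : Measure (ι → Bool)) : Prop :=
  IsProbabilityMeasure μ ∧
    ∀ S : Finset ι, ∀ f : ι → Bool,
      μ {ω | ∀ x ∈ S, ω x = f x} =
        ∏ x ∈ S, if f x then ENNReal.ofReal p else ENNReal.ofReal (1 - p)

/-- Reduction of a site modulo `n`, giving a point of the torus `ℤ_n²`. -/
def projT (n : ℕ) (y : Site) : ZMod n × ZMod n := ((y.1 : ZMod n), (y.2 : ZMod n))

/-- One step of the `U`-bootstrap process on the torus `ℤ_n²`. -/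
def stepT (n : ℕ) (U : Finset (Finset Site)) (A : Set (ZMod n × ZMod n)) :
    Set (ZMod n × ZMod n) :=
  A ∪ {x | ∃ X ∈ U, ∀ y ∈ X, x + projT n y ∈ A}

/-- The sets `A_t` of the `U`-bootstrap process on the torus. -/
def iterT (n : ℕ) (U : Finset (Finset Site)) (A : Set (ZMod n × ZMod n)) :
    ℕ → Set (ZMod n × ZMod n)
  | 0 => A
  | t + 1 => stepT n U (iterT n U A t)

/-- The closure of `A` under the `U`-bootstrap process on the torus. -/
def bclosureT (n : ℕ) (U : Finset (Finset Site)) (A : Set (ZMod n × ZMod n)) :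
    Set (ZMod n × ZMod n) :=
  ⋃ t : ℕ, iterT n U A t

/-- `A` percolates on the torus `ℤ_n²`. -/
def PercolatesT (n : ℕ) (U : Finset (Finset Site)) (A : Set (ZMod n × ZMod n)) : Prop :=
  bclosureT n U A = Set.univ

/-- The critical probability `p_c(ℤ_n², U)`, where `P` is the family of product
Bernoulli measures on subsets of the torus. -/
noncomputable def pcT (n : ℕ) (U : Finset (Finset Site))
    (P : ℝ → Measure ((ZMod n × ZMod n) → Bool)) : ℝ :=
  sInf {p : ℝ | p ∈ Set.Icc (0 : ℝ) 1 ∧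
    1 / 2 ≤ P p {ω | PercolatesT n U {x | ω x = true}}}

/-- The Euclidean (`ℓ₂`) distance between two sites. -/
noncomputable def dist2 (x y : Site) : ℝ :=
  Real.sqrt ((((x.1 - y.1 : ℤ) : ℝ)) ^ 2 + (((x.2 - y.2 : ℤ) : ℝ)) ^ 2)

/-- A set of sites is (strongly) connected in the graph `G_κ` joining sites at
Euclidean distance at most `κ`. -/
def Conn (κ : ℝ) (S : Set Site) : Prop :=
  ∀ x ∈ S, ∀ y ∈ S,
    Relation.ReflTransGen (fun a b : Site => b ∈ S ∧ dist2 a b ≤ κ) x y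

/-- The range `ν` of the update family:
`ν = max {‖x − y‖₂ : x, y ∈ X ∪ {0}, X ∈ U}`. -/
noncomputable def nu (U : Finset (Finset Site)) : ℝ :=
  sSup {d : ℝ | ∃ X ∈ U, ∃ x ∈ insert (0 : Site) X, ∃ y ∈ insert (0 : Site) X,
    d = dist2 x y}

/-- The diameter of a set of sites. -/
noncomputable def diam2 (K : Set Site) : ℝ :=
  sSup {d : ℝ | ∃ x ∈ K, ∃ y ∈ K, d = dist2 x y}

/-- The projection `π(K, u) = max {|⟨x − y, u⟩| : x, y ∈ K}`. -/
noncomputable def proj (K : Set Site) (u : ℝ × ℝ) : ℝ :=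
  sSup {d : ℝ | ∃ x ∈ K, ∃ y ∈ K, d = |ip x u - ip y u|}

/-- A `T`-droplet: a nonempty intersection of translated half-planes `H_u + a_u`,
`u ∈ T`. -/
def IsDroplet (T : Set (ℝ × ℝ)) (D : Set Site) : Prop :=
  D.Nonempty ∧ ∃ a : (ℝ × ℝ) → Site, D = ⋂ u ∈ T, {x : Site | ip (x - a u) u < 0}

/-- `D` is the smallest `T`-droplet containing `K`. -/
def IsMinDroplet (T : Set (ℝ × ℝ)) (K D : Set Site) : Prop :=
  IsDroplet T D ∧ K ⊆ D ∧ ∀ D' : Set Site, IsDroplet T D' → K ⊆ D' → D ⊆ D'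

/-- An `a`-cluster: a strongly connected set of `a` sites. -/
def IsCluster (κ : ℝ) (a : ℕ) (B : Finset Site) : Prop :=
  B.card = a ∧ Conn κ ↑B

/-- One step of the `α`-covering algorithm: two droplets of the current collection lying
within strong-connectivity reach of a common translate of `D̂` are replaced by the
smallest `S_B`-droplet containing their union. -/
inductive CoverStep (SB : Set (ℝ × ℝ)) (κ : ℝ) (Dhat : Set Site) :
    Multiset (Set Site) → Multiset (Set Site) → Prop
  | merge (rest : Multiset (Set Site)) (D₁ D₂ D' : Set Site) (x : Site) :
      Conn κ (D₁ ∪ D₂ ∪ ((fun z => z + x) '' Dhat)) →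
      IsMinDroplet SB (D₁ ∪ D₂) D' →
      CoverStep SB κ Dhat (D₁ ::ₘ D₂ ::ₘ rest) (D' ::ₘ rest)

/-- `𝒟` is an `α`-cover of `K`: a possible output of the `α`-covering algorithm, started
from a maximal collection of pairwise disjoint `a`-clusters of `K`, each contained in a
translate of `D̂`. -/
def IsAlphaCover (κ : ℝ) (a : ℕ) (SB : Set (ℝ × ℝ)) (Dhat : Set Site)
    (K : Set Site) (𝒟 : Multiset (Set Site)) : Prop :=
  ∃ B : List (Finset Site), ∃ c : List Site,
    B.length = c.length ∧
    (∀ Bi ∈ B, IsCluster κ a Bi ∧ ↑Bi ⊆ K) ∧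
    B.Pairwise (fun B₁ B₂ => Disjoint B₁ B₂) ∧
    (∀ B' : Finset Site, IsCluster κ a B' → ↑B' ⊆ K → ∃ Bi ∈ B, ¬ Disjoint B' Bi) ∧
    (∀ i : ℕ, ∀ h₁ : i < B.length, ∀ h₂ : i < c.length,
      ↑(B.get ⟨i, h₁⟩) ⊆ (fun z => z + c.get ⟨i, h₂⟩) '' Dhat) ∧
    Relation.ReflTransGen (CoverStep SB κ Dhat)
      ↑(c.map fun v => (fun z => z + v) '' Dhat) 𝒟

/-- The droplet `D` is `α`-covered (with respect to the initial set `A`). -/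
def AlphaCovered (κ : ℝ) (a : ℕ) (SB : Set (ℝ × ℝ)) (Dhat : Set Site)
    (A D : Set Site) : Prop :=
  IsAlphaCover κ a SB Dhat (D ∩ A) {D}

/-- The constant `ρ` used for balanced families:
`ρ = max {‖y − Z‖₂ : u ∈ S_B, |Z| = α − 1, y ∈ [H_u ∪ Z] ∖ H_u}`. -/
noncomputable def rho (U : Finset (Finset Site)) (SB : Set (ℝ × ℝ)) (a : ℕ) : ℝ :=
  sSup {d : ℝ | ∃ u ∈ SB, ∃ Z : Finset Site, Z.card = a - 1 ∧
    ∃ y ∈ bclosure U (halfPlane u ∪ ↑Z) \ halfPlane u,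
      d = sInf {r : ℝ | ∃ z ∈ Z, r = dist2 y z}}

/-- The connectivity constant `κ = 2(ρ + ν)` for balanced families. -/
noncomputable def kappaB (U : Finset (Finset Site)) (SB : Set (ℝ × ℝ)) (a : ℕ) : ℝ :=
  2 * (rho U SB a + nu U)

/-- A valid choice of the finite set `S_B` of stable directions for a balanced family:
`ᾱ(u) ≥ α` for all `u ∈ S_B`, and `S_B` meets every open semicircle. -/
def ValidSB (U : Finset (Finset Site)) (a : ℕ) (SB : Set (ℝ × ℝ)) : Prop :=
  SB.Finite ∧ SB ⊆ stableSet U ∧ (∀ u ∈ SB, (a : ℕ∞) ≤ alphaBar U u) ∧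
  ∀ w : ℝ × ℝ, unitVec w → ∃ u ∈ SB, 0 < ipR u w

/-- `D` is internally spanned by `A`: some strongly connected subset `L` of `[D ∩ A]`
has `D` as the smallest `T`-droplet containing it. -/
def InternallySpanned (U : Finset (Finset Site)) (T : Set (ℝ × ℝ)) (κ : ℝ)
    (A D : Set Site) : Prop :=
  ∃ L : Set Site, L ⊆ bclosure U (D ∩ A) ∧ Conn κ L ∧ IsMinDroplet T L D

/-- A valid choice of the set `S_U = {u*, −u*, u^l, u^r}` of stable directions for an
unbalanced family: `min {α(u*), α(−u*)} ≥ α + 1`, `u^l` (resp. `u^r`) lies in the open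
semicircle to the left (resp. right) of `u*`, and `min {ᾱ(u^l), ᾱ(u^r)} = α`. -/
def ValidSU (U : Finset (Finset Site)) (a : ℕ) (ustar ul ur : ℝ × ℝ) : Prop :=
  ustar ∈ stableSet U ∧ -ustar ∈ stableSet U ∧ ul ∈ stableSet U ∧ ur ∈ stableSet U ∧
  (a : ℕ∞) + 1 ≤ difficulty U ustar ∧ (a : ℕ∞) + 1 ≤ difficulty U (-ustar) ∧
  0 < ipR ul (-ustar.2, ustar.1) ∧ 0 < ipR ur (ustar.2, -ustar.1) ∧
  min (alphaBar U ul) (alphaBar U ur) = (a : ℕ∞)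

/-- The point of `S¹` at angle `θ`. -/
noncomputable def circlePt (θ : ℝ) : ℝ × ℝ := (Real.cos θ, Real.sin θ)

/-- `u` is a rational direction: it is parallel to a nonzero integer vector,
i.e. it has rational or infinite slope. -/
def RationalDir (u : ℝ × ℝ) : Prop :=
  ∃ x : Site, x ≠ 0 ∧ (x.1 : ℝ) * u.2 = (x.2 : ℝ) * u.1

/-- The closed arc of directions from `u` to `v` (anticlockwise). -/
def arcFrom (u v : ℝ × ℝ) : Set (ℝ × ℝ) :=
  {w | ∃ θ₁ θ₂ θ : ℝ, circlePt θ₁ = u ∧ circlePt θ₂ = v ∧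
    θ₁ ≤ θ₂ ∧ θ₂ < θ₁ + 2 * Real.pi ∧ θ ∈ Set.Icc θ₁ θ₂ ∧ circlePt θ = w}

/-- `u` and `v` are consecutive elements of `T`:
`u ≠ v` and `T ∩ [u, v] = {u, v}`. -/
def ConsecutiveIn (T : Set (ℝ × ℝ)) (u v : ℝ × ℝ) : Prop :=
  u ≠ v ∧ T ∩ arcFrom u v = {u, v}

section Aux

variable (U : Finset (Finset Site))

lemma subset_step (A : Set Site) : A ⊆ step U A := Set.subset_union_left

lemma step_mono {A B : Set Site} (h : A ⊆ B) : step U A ⊆ step U B := by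
  rintro x (hx | ⟨X, hX, hall⟩)
  · exact Or.inl (h hx)
  · exact Or.inr ⟨X, hX, fun y hy => h (hall y hy)⟩

lemma iter_mono_le {A : Set Site} : ∀ {s t : ℕ}, s ≤ t → iter U A s ⊆ iter U A t := by
  intro s t h
  induction h with
  | refl => exact subset_rfl
  | step _ ih => exact ih.trans (subset_step U _)

lemma subset_bclosure (A : Set Site) : A ⊆ bclosure U A :=
  Set.subset_iUnion (iter U A) 0

lemma iter_subset_bclosure (A : Set Site) (t : ℕ) : iter U A t ⊆ bclosure U A :=
  Set.subset_iUnion (iter U A) t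

lemma bclosure_mono {A B : Set Site} (h : A ⊆ B) : bclosure U A ⊆ bclosure U B := by
  refine Set.iUnion_subset fun t => ?_
  refine (?_ : iter U A t ⊆ iter U B t).trans (iter_subset_bclosure U B t)
  induction t with
  | zero => exact h
  | succ t ih => exact step_mono U ih

lemma step_bclosure (A : Set Site) : step U (bclosure U A) = bclosure U A := by
  refine Set.Subset.antisymm ?_ (subset_step U _)
  rintro x (hx | ⟨X, hX, hall⟩)
  · exact hx
  · have : ∀ y : Site, ∃ t : ℕ, y ∈ X → x + y ∈ iter U A t := by
      intro y
      by_cases hy : y ∈ X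
      · obtain ⟨t, ht⟩ := Set.mem_iUnion.1 (hall y hy)
        exact ⟨t, fun _ => ht⟩
      · exact ⟨0, fun h => absurd h hy⟩
    choose g hg using this
    refine (iter_subset_bclosure U A ((X.sup g) + 1)) ?_
    refine Or.inr ⟨X, hX, fun y hy => ?_⟩
    exact iter_mono_le U (Finset.le_sup (f := g) hy) (hg y hy)

lemma bclosure_le {A B : Set Site} (h : A ⊆ bclosure U B) : bclosure U A ⊆ bclosure U B := by
  refine Set.iUnion_subset fun t => ?_
  induction t with
  | zero => exact h
  | succ t ih =>
      have : step U (iter U A t) ⊆ step U (bclosure U B) := step_mono U ih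
      rw [step_bclosure] at this; exact this

lemma step_image_add (v : Site) (A : Set Site) :
    step U ((fun z => z + v) '' A) = (fun z => z + v) '' step U A := by
  have him : ∀ (S : Set Site) (x : Site), x ∈ (fun z => z + v) '' S ↔ x - v ∈ S := by
    intro S x
    constructor
    · rintro ⟨z, hz, rfl⟩; simpa using hz
    · intro h; exact ⟨x - v, h, sub_add_cancel x v⟩
  ext x
  rw [him]
  constructor
  · rintro (hx | ⟨X, hX, hall⟩)
    · exact Or.inl ((him A x).1 hx)
    · refine Or.inr ⟨X, hX, fun y hy => ?_⟩
      have := (him A (x + y)).1 (hall y hy)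
      simpa [add_sub_right_comm] using this
  · rintro (hx | ⟨X, hX, hall⟩)
    · exact Or.inl ((him A x).2 hx)
    · refine Or.inr ⟨X, hX, fun y hy => ?_⟩
      refine (him A (x + y)).2 ?_
      simpa [add_sub_right_comm] using hall y hy

lemma iter_image_add (v : Site) (A : Set Site) (t : ℕ) :
    iter U ((fun z => z + v) '' A) t = (fun z => z + v) '' iter U A t := by
  induction t with
  | zero => rfl
  | succ t ih => rw [iter, ih, step_image_add]; rfl

lemma bclosure_image_add (v : Site) (A : Set Site) :
    bclosure U ((fun z => z + v) '' A) = (fun z => z + v) '' bclosure U A := by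
  simp only [bclosure, iter_image_add, Set.image_iUnion]

end Aux

section IpAux

lemma ip_add (x y : Site) (u : ℝ × ℝ) : ip (x + y) u = ip x u + ip y u := by
  simp only [ip, Prod.fst_add, Prod.snd_add]
  push_cast
  ring

lemma ip_zero (u : ℝ × ℝ) : ip (0 : Site) u = 0 := by
  simp [ip]

lemma ip_neg (x : Site) (u : ℝ × ℝ) : ip (-x) u = -ip x u := by
  simp only [ip, Prod.fst_neg, Prod.snd_neg]
  push_cast
  ring

lemma ip_sub (x y : Site) (u : ℝ × ℝ) : ip (x - y) u = ip x u - ip y u := by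
  rw [sub_eq_add_neg, ip_add, ip_neg]; ring

lemma ip_zsmul (m : ℤ) (x : Site) (u : ℝ × ℝ) : ip (m • x) u = (m : ℝ) * ip x u := by
  simp only [ip, Prod.smul_fst, Prod.smul_snd, smul_eq_mul]
  push_cast
  ring

lemma ip_nsmul (m : ℕ) (x : Site) (u : ℝ × ℝ) : ip (m • x) u = (m : ℝ) * ip x u := by
  have : (m : ℤ) • x = m • x := natCast_zsmul x m
  rw [← this, ip_zsmul]
  norm_num

end IpAux

section LineAux

variable {u : ℝ × ℝ}

/-- Coordinates of a site from its inner products with `u` and `rightPerp u`. -/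
lemma coord_fst (hu : unitVec u) (x : Site) :
    (x.1 : ℝ) = ip x u * u.1 + ip x (rightPerp u) * u.2 := by
  have hu' : u.1 ^ 2 + u.2 ^ 2 = 1 := hu
  simp only [ip, rightPerp]
  linear_combination (-(x.1 : ℝ)) * hu'

lemma coord_snd (hu : unitVec u) (x : Site) :
    (x.2 : ℝ) = ip x u * u.2 - ip x (rightPerp u) * u.1 := by
  have hu' : u.1 ^ 2 + u.2 ^ 2 = 1 := hu
  simp only [ip, rightPerp]
  linear_combination (-(x.2 : ℝ)) * hu'

lemma eq_zero_of_ip_zero (hu : unitVec u) {x : Site}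
    (h1 : ip x u = 0) (h2 : ip x (rightPerp u) = 0) : x = 0 := by
  have e1 : (x.1 : ℝ) = 0 := by rw [coord_fst hu x, h1, h2]; ring
  have e2 : (x.2 : ℝ) = 0 := by rw [coord_snd hu x, h1, h2]; ring
  have : x.1 = 0 := by exact_mod_cast e1
  have : x.2 = 0 := by exact_mod_cast e2
  ext <;> simp_all

/-- Two integer vectors orthogonal to `u` are parallel. -/
lemma line_parallel (hu : unitVec u) {z w : Site} (hz : ip z u = 0) (hw : ip w u = 0) :
    z.1 * w.2 = z.2 * w.1 := by
  have hu0 : u.1 ≠ 0 ∨ u.2 ≠ 0 := by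
    by_contra h
    push_neg at h
    rw [unitVec, h.1, h.2] at hu
    norm_num at hu
  have key : ∀ c : ℝ, c = u.1 ∨ c = u.2 →
      ((z.1 : ℝ) * w.2 - z.2 * w.1) * c = 0 := by
    rintro c (rfl | rfl)
    · have : ((z.1 : ℝ) * w.2 - z.2 * w.1) * u.1
          = (w.2 : ℝ) * ip z u - (z.2 : ℝ) * ip w u := by
        simp only [ip]; ring
      rw [this, hz, hw]; ring
    · have : ((z.1 : ℝ) * w.2 - z.2 * w.1) * u.2
          = (z.1 : ℝ) * ip w u - (w.1 : ℝ) * ip z u := by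
        simp only [ip]; ring
      rw [this, hz, hw]; ring
  have hr : ((z.1 : ℝ) * w.2 - z.2 * w.1) = 0 := by
    rcases hu0 with h | h
    · exact (mul_eq_zero.1 (key u.1 (Or.inl rfl))).resolve_right h
    · exact (mul_eq_zero.1 (key u.2 (Or.inr rfl))).resolve_right h
  have : ((z.1 * w.2 - z.2 * w.1 : ℤ) : ℝ) = 0 := by push_cast; linarith
  have : (z.1 * w.2 - z.2 * w.1 : ℤ) = 0 := by exact_mod_cast this
  linarith

/-- The line `ℓ_u` is generated by a single primitive vector `e`. -/
lemma exists_line_gen (hu : unitVec u) (hur : RationalDir u) :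
    ∃ e : Site, ip e u = 0 ∧ ip e (rightPerp u) ≠ 0 ∧
      ∀ z : Site, ip z u = 0 → ∃ m : ℤ, z = m • e := by
  obtain ⟨x, hx0, hxr⟩ := hur
  set y : Site := (x.2, -x.1) with hy_def
  have hy : ip y u = 0 := by
    simp only [ip, hy_def]
    push_cast
    linarith [hxr]
  have hy0 : y ≠ 0 := by
    simp only [hy_def, ne_eq, Prod.ext_iff, Prod.fst_zero, Prod.snd_zero, neg_eq_zero]
    intro ⟨h1, h2⟩
    exact hx0 (by ext <;> simp [h1, h2])
  have hysq : 0 < y.1 ^ 2 + y.2 ^ 2 := by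
    rcases (by simpa [Prod.ext_iff] using hy0 : ¬(y.1 = 0 ∧ y.2 = 0)) with h
    rcases Classical.em (y.1 = 0) with h1 | h1
    · have h2 : y.2 ≠ 0 := fun h2 => h ⟨h1, h2⟩
      positivity
    · positivity
  -- the "coordinate" map on the line
  set ψ : Site → ℤ := fun z => z.1 * y.1 + z.2 * y.2 with hψ_def
  have hinj : ∀ z w : Site, ip z u = 0 → ip w u = 0 → ψ z = ψ w → z = w := by
    intro z w hz hw hzw
    have hd : ip (z - w) u = 0 := by rw [ip_sub, hz, hw]; ring
    have hpar : (z - w).1 * y.2 = (z - w).2 * y.1 := line_parallel hu hd hy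
    have hψd : (z - w).1 * y.1 + (z - w).2 * y.2 = 0 := by
      simp only [Prod.fst_sub, Prod.snd_sub, hψ_def] at hzw ⊢
      linarith
    have h1 : (z - w).1 * (y.1 ^ 2 + y.2 ^ 2) = 0 := by
      linear_combination y.1 * hψd + y.2 * hpar
    have h2 : (z - w).2 * (y.1 ^ 2 + y.2 ^ 2) = 0 := by
      linear_combination y.2 * hψd - y.1 * hpar
    have e1 : (z - w).1 = 0 := by
      rcases mul_eq_zero.1 h1 with h | h
      · exact h
      · exact absurd h (by positivity)
    have e2 : (z - w).2 = 0 := by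
      rcases mul_eq_zero.1 h2 with h | h
      · exact h
      · exact absurd h (by positivity)
    have : z - w = 0 := by
      ext
      · simpa using e1
      · simpa using e2
    exact sub_eq_zero.1 this
  -- the set of positive attained values of ψ on the line
  set N : Set ℕ := {n : ℕ | 0 < n ∧ ∃ z : Site, ip z u = 0 ∧ ψ z = (n : ℤ)} with hN_def
  have hNne : N.Nonempty := by
    refine ⟨(y.1 ^ 2 + y.2 ^ 2).toNat, ?_, y, hy, ?_⟩
    · simpa using hysq
    · rw [Int.toNat_of_nonneg hysq.le]
      simp only [hψ_def]; ring
  set d : ℕ := sInf N with hd_def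
  obtain ⟨hdpos, e, he0, heψ⟩ := Nat.sInf_mem hNne
  have hψsmul : ∀ (q : ℤ) (z : Site), ψ (z - q • e) = ψ z - q * ψ e := by
    intro q z
    simp only [hψ_def, Prod.fst_sub, Prod.snd_sub, Prod.smul_fst, Prod.smul_snd,
      smul_eq_mul]
    ring
  have hdvd : ∀ z : Site, ip z u = 0 → (d : ℤ) ∣ ψ z := by
    intro z hz
    set r : ℤ := ψ z % (d : ℤ) with hr_def
    have hd0 : (d : ℤ) ≠ 0 := by exact_mod_cast hdpos.ne'
    have hr0 : 0 ≤ r := Int.emod_nonneg _ hd0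
    have hrd : r < (d : ℤ) := Int.emod_lt_of_pos _ (by exact_mod_cast hdpos)
    by_contra hnd
    have hrne : r ≠ 0 := fun h => hnd (Int.dvd_of_emod_eq_zero h)
    have hz' : ip (z - (ψ z / (d : ℤ)) • e) u = 0 := by
      rw [ip_sub, ip_zsmul, hz, he0]; ring
    have hψz' : ψ (z - (ψ z / (d : ℤ)) • e) = r := by
      rw [hψsmul, heψ, hr_def, Int.emod_def]
      ring
    have : r.toNat ∈ N := by
      refine ⟨by omega, z - (ψ z / (d : ℤ)) • e, hz', ?_⟩
      rw [hψz', Int.toNat_of_nonneg hr0]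
    have := Nat.sInf_le this
    omega
  refine ⟨e, he0, ?_, ?_⟩
  · intro hperp
    have : e = 0 := eq_zero_of_ip_zero hu he0 hperp
    rw [this] at heψ
    simp only [hψ_def, Prod.fst_zero, Prod.snd_zero, zero_mul, add_zero] at heψ
    omega
  · intro z hz
    obtain ⟨m, hm⟩ := hdvd z hz
    refine ⟨m, hinj z (m • e) hz ?_ ?_⟩
    · rw [ip_zsmul, he0]; ring
    · have : ψ (m • e) = m * ψ e := by
        simp only [hψ_def, Prod.smul_fst, Prod.smul_snd, smul_eq_mul]; ring
      rw [this, heψ, hm]; ring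

end LineAux

section CoreAux

lemma mem_image_add {v : Site} {S : Set Site} {x : Site} :
    x ∈ (fun z => z + v) '' S ↔ x - v ∈ S := by
  constructor
  · rintro ⟨z, hz, rfl⟩; simpa using hz
  · intro h; exact ⟨x - v, h, sub_add_cancel x v⟩

/-- If `u` is unstable then the whole line `ℓ_u` is infected by `H_u` alone. -/
lemma line_subset_of_unstable (U : Finset (Finset Site)) {u : ℝ × ℝ}
    (hns : bclosure U (halfPlane u) ≠ halfPlane u) :
    line u ⊆ bclosure U (halfPlane u) := by
  have hstep : ¬ step U (halfPlane u) ⊆ halfPlane u := by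
    intro h
    apply hns
    refine Set.Subset.antisymm (Set.iUnion_subset fun t => ?_) (subset_bclosure U _)
    induction t with
    | zero => exact subset_rfl
    | succ t ih => exact ((step_mono U ih).trans h)
  obtain ⟨x, hx, hxH⟩ := Set.not_subset.1 hstep
  rcases hx with hx | ⟨X, hX, hall⟩
  · exact absurd hx hxH
  · intro z hz
    have hz0 : ip z u = 0 := hz
    have hx0 : 0 ≤ ip x u := le_of_not_gt hxH
    have : z ∈ iter U (halfPlane u) 1 := by
      refine Or.inr ⟨X, hX, fun y hy => ?_⟩
      have h1 : ip (x + y) u < 0 := hall y hy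
      rw [ip_add] at h1
      show ip (z + y) u < 0
      rw [ip_add, hz0]
      linarith
    exact iter_subset_bclosure U _ 1 this

set_option maxHeartbeats 1600000 in
/-- The core construction: a semi-infinite arithmetic progression in the closure. -/
lemma core_progression (U : Finset (Finset Site)) {u : ℝ × ℝ} (hu : unitVec u)
    {e : Site} (he0 : ip e u = 0) (he1 : ip e (rightPerp u) ≠ 0) (Z : Finset Site)
    (hP : {j : ℤ | 0 < j ∧ j • e ∈ bclosure U (halfPlane u ∪ ↑Z)}.Infinite) :
    ∃ b : Site, ip b u = 0 ∧ ∃ p : ℕ, 0 < p ∧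
      ∀ n : ℕ, b + n • (p • e) ∈ bclosure U (halfPlane u ∪ ↑Z) := by
  classical
  set H : Set Site := halfPlane u with hH_def
  set Y : Set Site := bclosure U (H ∪ ↑Z) with hY_def
  by_cases hs : bclosure U H = H
  case neg =>
    -- unstable: the whole line is in the closure of `H` alone
    have hline : line u ⊆ Y := by
      refine (line_subset_of_unstable U hs).trans (bclosure_mono U ?_)
      exact Set.subset_union_left
    refine ⟨0, ip_zero u, 1, one_pos, fun n => ?_⟩
    have : ip ((0 : Site) + n • (1 • e)) u = 0 := by
      rw [ip_add, ip_zero, ip_nsmul, ip_nsmul, he0]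
      ring
    exact hline this
  case pos =>
  set rp : ℝ × ℝ := rightPerp u with hrp_def
  set s : ℝ := if 0 < ip e rp then 1 else -1 with hs_def
  set χ : Site → ℝ := fun x => s * ip x rp with hχ_def
  have hsabs : |s| = 1 := by
    rw [hs_def]; split <;> simp
  have hχabs : ∀ x : Site, |χ x| = |ip x rp| := by
    intro x; rw [hχ_def]; simp only []
    rw [abs_mul, hsabs, one_mul]
  have hχadd : ∀ x y : Site, χ (x + y) = χ x + χ y := by
    intro x y; simp only [hχ_def, ip_add]; ring
  have hχzsmul : ∀ (m : ℤ) (x : Site), χ (m • x) = (m : ℝ) * χ x := by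
    intro m x; simp only [hχ_def, ip_zsmul]; ring
  set ε : ℝ := χ e with hε_def
  have hε : 0 < ε := by
    rw [hε_def, hχ_def]
    simp only [hs_def]
    rcases lt_trichotomy (ip e rp) 0 with h | h | h
    · rw [if_neg (by linarith)]; nlinarith
    · exact absurd h he1
    · rw [if_pos h]; nlinarith
  -- bound on the rules
  set B : ℝ := ((U.sup fun X => X.sup fun y => ⌈|ip y rp|⌉₊ : ℕ) : ℝ) with hB_def
  have hB0 : 0 ≤ B := Nat.cast_nonneg _
  have hB : ∀ X ∈ U, ∀ y ∈ X, |χ y| ≤ B := by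
    intro X hX y hy
    rw [hχabs]
    refine (Nat.le_ceil _).trans ?_
    rw [hB_def]
    have h1 : ⌈|ip y rp|⌉₊ ≤ X.sup fun y => ⌈|ip y rp|⌉₊ :=
      Finset.le_sup (f := fun y => ⌈|ip y rp|⌉₊) hy
    have h2 : (X.sup fun y => ⌈|ip y rp|⌉₊) ≤
        U.sup fun X => X.sup fun y => ⌈|ip y rp|⌉₊ :=
      Finset.le_sup (f := fun X : Finset Site => X.sup fun y => ⌈|ip y rp|⌉₊) hX
    exact_mod_cast Nat.cast_le.2 (h1.trans h2)
  -- ceiling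
  have hv0 : ∃ v₀ : Site, 0 < ip v₀ u := by
    have hu0 : u.1 ≠ 0 ∨ u.2 ≠ 0 := by
      by_contra h
      push_neg at h
      have hu' : u.1 ^ 2 + u.2 ^ 2 = 1 := hu
      rw [h.1, h.2] at hu'
      norm_num at hu'
    rcases hu0 with h | h
    · rcases lt_or_gt_of_ne h with h | h
      · exact ⟨(-1, 0), by simp [ip]; linarith⟩
      · exact ⟨(1, 0), by simp [ip]; linarith⟩
    · rcases lt_or_gt_of_ne h with h | h
      · exact ⟨(0, -1), by simp [ip]; linarith⟩
      · exact ⟨(0, 1), by simp [ip]; linarith⟩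
  obtain ⟨v₀, hv₀⟩ := hv0
  set MZ : ℝ := ((Z.sup fun z => ⌈ip z u⌉₊ : ℕ) : ℝ) with hMZ_def
  have hMZ0 : 0 ≤ MZ := Nat.cast_nonneg _
  have hMZ : ∀ z ∈ Z, ip z u ≤ MZ := by
    intro z hz
    refine (Nat.le_ceil _).trans ?_
    rw [hMZ_def]
    exact_mod_cast Nat.cast_le.2 (Finset.le_sup (f := fun z => ⌈ip z u⌉₊) hz)
  obtain ⟨n₀, hn₀⟩ := exists_nat_gt (MZ / ip v₀ u)
  set v : Site := (n₀ : ℤ) • v₀ with hv_def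
  set Λ : ℝ := ip v u with hΛ_def
  have hΛMZ : MZ < Λ := by
    rw [hΛ_def, hv_def, ip_zsmul]
    push_cast
    rw [div_lt_iff₀ hv₀] at hn₀
    linarith
  have hΛ0 : 0 < Λ := lt_of_le_of_lt hMZ0 hΛMZ
  have hceil : Y ⊆ {x : Site | ip x u < Λ} := by
    have himg : {x : Site | ip x u < Λ} = (fun z => z + v) '' H := by
      ext x
      rw [mem_image_add]
      show ip x u < Λ ↔ ip (x - v) u < 0
      rw [ip_sub]
      constructor <;> intro h <;> [linarith; linarith]
    have hclosed : bclosure U {x : Site | ip x u < Λ} = {x : Site | ip x u < Λ} := by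
      rw [himg, bclosure_image_add, hs]
    rw [hY_def, ← hclosed]
    refine bclosure_mono U ?_
    rintro x (hx | hx)
    · exact lt_trans hx hΛ0
    · exact lt_of_le_of_lt (hMZ x hx) hΛMZ
  -- slab width
  obtain ⟨J₀, hJ₀⟩ := exists_nat_gt (B / ε)
  set J : ℕ := J₀ + 1 with hJ_def
  set W : ℝ := (J : ℝ) * ε with hW_def
  have hWB : B < W := by
    rw [hW_def, hJ_def]
    rw [div_lt_iff₀ hε] at hJ₀
    push_cast
    nlinarith
  have hW0 : 0 < W := lt_of_le_of_lt hB0 hWB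
  set cZ : ℝ := ((Z.sup fun z => ⌈|ip z rp|⌉₊ : ℕ) : ℝ) + 1 with hcZ_def
  have hcZ : ∀ z ∈ Z, χ z < cZ := by
    intro z hz
    refine lt_of_le_of_lt (le_abs_self _) ?_
    rw [hχabs]
    refine lt_of_le_of_lt (Nat.le_ceil _) ?_
    rw [hcZ_def]
    have : (⌈|ip z rp|⌉₊ : ℝ) ≤ ((Z.sup fun z => ⌈|ip z rp|⌉₊ : ℕ) : ℝ) :=
      Nat.cast_le.2 (Finset.le_sup (f := fun z => ⌈|ip z rp|⌉₊) hz)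
    linarith
  have hcZ0 : 0 < cZ := by
    rw [hcZ_def]
    have : (0:ℝ) ≤ ((Z.sup fun z => ⌈|ip z rp|⌉₊ : ℕ) : ℝ) := Nat.cast_nonneg _
    linarith
  set c : ℕ → ℝ := fun m => cZ + (m : ℝ) * ε with hc_def
  set slab : ℕ → Set Site := fun m =>
    {x | x ∈ Y ∧ ¬ ip x u < 0 ∧ c m ≤ χ x ∧ χ x < c m + W} with hslab_def
  have hslabY : ∀ m, slab m ⊆ Y := fun m x hx => hx.1
  -- KEY: far sites are generated by `H` together with a single slab
  have key : ∀ m t : ℕ, ∀ x ∈ iter U (H ∪ ↑Z) t, c m + W ≤ χ x →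
      x ∈ bclosure U (H ∪ slab m) := by
    intro m t
    induction t with
    | zero =>
        intro x hx hχx
        rcases hx with hx | hx
        · exact subset_bclosure U _ (Or.inl hx)
        · exfalso
          have h1 : χ x < cZ := hcZ x hx
          have h2 : cZ ≤ c m + W := by
            rw [hc_def]
            have : (0:ℝ) ≤ (m : ℝ) * ε := mul_nonneg (Nat.cast_nonneg _) hε.le
            simp only []
            linarith
          linarith
    | succ t ih =>
        intro x hx hχx
        rcases (hx : x ∈ step U (iter U (H ∪ ↑Z) t)) with hx | ⟨X, hX, hall⟩
        · exact ih x hx hχx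
        · have hmem : ∀ y ∈ X, x + y ∈ bclosure U (H ∪ slab m) := by
            intro y hy
            have hyY : x + y ∈ Y := iter_subset_bclosure U _ t (hall y hy)
            have hχy : c m < χ (x + y) := by
              have h1 : |χ y| ≤ B := hB X hX y hy
              have h2 : χ (x + y) = χ x + χ y := hχadd x y
              have h3 : -B ≤ χ y := (abs_le.1 h1).1
              linarith
            by_cases hcase : c m + W ≤ χ (x + y)
            · exact ih _ (hall y hy) hcase
            · by_cases hH2 : ip (x + y) u < 0
              · exact subset_bclosure U _ (Or.inl hH2)
              · exact subset_bclosure U _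
                  (Or.inr ⟨hyY, hH2, hχy.le, lt_of_not_ge hcase⟩)
          have : x ∈ step U (bclosure U (H ∪ slab m)) := Or.inr ⟨X, hX, hmem⟩
          rwa [step_bclosure] at this
  have hkeyY : ∀ m : ℕ, ∀ x ∈ Y, c m + W ≤ χ x → x ∈ bclosure U (H ∪ slab m) := by
    intro m x hx hχx
    obtain ⟨t, ht⟩ := Set.mem_iUnion.1 hx
    exact key m t x ht hχx
  -- the finite window
  have hu1 : |u.1| ≤ 1 := by
    have hu' : u.1 ^ 2 + u.2 ^ 2 = 1 := hu
    nlinarith [abs_nonneg u.1, sq_abs u.1, sq_nonneg u.2]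
  have hu2 : |u.2| ≤ 1 := by
    have hu' : u.1 ^ 2 + u.2 ^ 2 = 1 := hu
    nlinarith [abs_nonneg u.2, sq_abs u.2, sq_nonneg u.1]
  set R : ℝ := Λ + (cZ + W) with hR_def
  set Win : Set Site := {x | ¬ ip x u < 0 ∧ ip x u < Λ ∧ cZ ≤ χ x ∧ χ x < cZ + W}
    with hWin_def
  have hWinfin : Win.Finite := by
    have hbound : ∀ x ∈ Win, |(x.1 : ℝ)| ≤ R ∧ |(x.2 : ℝ)| ≤ R := by
      rintro x ⟨h1, h2, h3, h4⟩
      have hipu : |ip x u| < Λ := by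
        rw [abs_lt]; exact ⟨by linarith [le_of_not_gt h1, hΛ0], h2⟩
      have hiprp : |ip x rp| < cZ + W := by
        rw [← hχabs, abs_lt]
        constructor
        · linarith
        · exact h4
      constructor
      · rw [coord_fst hu x]
        have t := abs_add_le (ip x u * u.1) (ip x rp * u.2)
        rw [abs_mul, abs_mul] at t
        have k1 : |ip x u| * |u.1| ≤ |ip x u| * 1 :=
          mul_le_mul_of_nonneg_left hu1 (abs_nonneg _)
        have k2 : |ip x rp| * |u.2| ≤ |ip x rp| * 1 :=
          mul_le_mul_of_nonneg_left hu2 (abs_nonneg _)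
        rw [hR_def]
        linarith
      · rw [coord_snd hu x]
        have t := abs_sub (ip x u * u.2) (ip x rp * u.1)
        rw [abs_mul, abs_mul] at t
        have k1 : |ip x rp| * |u.1| ≤ |ip x rp| * 1 :=
          mul_le_mul_of_nonneg_left hu1 (abs_nonneg _)
        have k2 : |ip x u| * |u.2| ≤ |ip x u| * 1 :=
          mul_le_mul_of_nonneg_left hu2 (abs_nonneg _)
        rw [hR_def]
        linarith
    refine Set.Finite.subset (Set.finite_Icc ((-⌈R⌉, -⌈R⌉) : Site) (⌈R⌉, ⌈R⌉)) ?_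
    intro x hx
    obtain ⟨hx1, hx2⟩ := hbound x hx
    have e1 : x.1 ≤ ⌈R⌉ := by
      have : (x.1 : ℝ) ≤ (⌈R⌉ : ℝ) := le_trans (le_abs_self _) (hx1.trans (Int.le_ceil R))
      exact_mod_cast this
    have e2 : -⌈R⌉ ≤ x.1 := by
      have : ((-x.1 : ℤ) : ℝ) ≤ (⌈R⌉ : ℝ) := by
        push_cast
        exact le_trans (neg_le_abs _) (hx1.trans (Int.le_ceil R))
      have h := (by exact_mod_cast this : -x.1 ≤ ⌈R⌉)
      omega
    have e3 : x.2 ≤ ⌈R⌉ := by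
      have : (x.2 : ℝ) ≤ (⌈R⌉ : ℝ) := le_trans (le_abs_self _) (hx2.trans (Int.le_ceil R))
      exact_mod_cast this
    have e4 : -⌈R⌉ ≤ x.2 := by
      have : ((-x.2 : ℤ) : ℝ) ≤ (⌈R⌉ : ℝ) := by
        push_cast
        exact le_trans (neg_le_abs _) (hx2.trans (Int.le_ceil R))
      have h := (by exact_mod_cast this : -x.2 ≤ ⌈R⌉)
      omega
    rw [Set.mem_Icc]
    exact ⟨⟨e2, e4⟩, ⟨e1, e3⟩⟩
  -- patterns and pigeonhole
  set Q : ℕ → Set Site := fun m => (fun z => z + (-(m : ℤ)) • e) '' slab m with hQ_def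
  have hQWin : ∀ m, Q m ⊆ Win := by
    intro m x hx
    rw [hQ_def] at hx
    rw [mem_image_add] at hx
    obtain ⟨hxY, hxH, hx3, hx4⟩ := hx
    have hxu : ip (x - (-(m:ℤ)) • e) u = ip x u := by
      rw [ip_sub, ip_zsmul, he0]; ring
    have hxχ : χ (x - (-(m:ℤ)) • e) = χ x + (m : ℝ) * ε := by
      have : x - (-(m:ℤ)) • e = x + (m:ℤ) • e := by
        rw [neg_smul, sub_neg_eq_add]
      rw [this, hχadd, hχzsmul, ← hε_def]
      push_cast
      ring
    refine ⟨?_, ?_, ?_, ?_⟩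
    · rw [← hxu]; exact hxH
    · have := hceil hxY
      simp only [Set.mem_setOf_eq] at this
      rwa [hxu] at this
    · have : c m ≤ χ x + (m:ℝ) * ε := by rw [← hxχ]; exact hx3
      rw [hc_def] at this
      simp only [] at this
      linarith
    · have : χ x + (m:ℝ) * ε < c m + W := by rw [← hxχ]; exact hx4
      rw [hc_def] at this
      simp only [] at this
      linarith
  -- pigeonhole on patterns
  have hsubfin : Finite ↥{T : Set Site | T ⊆ Win} := hWinfin.finite_subsets.to_subtype
  obtain ⟨Tb, hfib⟩ := Finite.exists_infinite_fiber
      (fun m : ℕ => (⟨Q m, hQWin m⟩ : ↥{T : Set Site | T ⊆ Win}))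
  have hfib' : {m : ℕ | Q m = Tb.1}.Infinite := by
    refine (Set.infinite_coe_iff.1 hfib).mono ?_
    intro m hm
    have hm' : (⟨Q m, hQWin m⟩ : ↥{T : Set Site | T ⊆ Win}) = Tb := hm
    exact congrArg Subtype.val hm'
  obtain ⟨m, hm⟩ := hfib'.nonempty
  obtain ⟨m', hm', hmm'⟩ : ∃ m', Q m' = Tb.1 ∧ m + J < m' := by
    have h2 := hfib'.diff (Set.finite_Icc 0 (m + J))
    obtain ⟨m', hm'⟩ := h2.nonempty
    refine ⟨m', hm'.1, ?_⟩
    have := hm'.2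
    simp only [Set.mem_Icc, not_and, not_le] at this
    exact this (Nat.zero_le m')
  have hQm : Q m = Q m' := by rw [hm, hm']
  have himage : ∀ (a b : ℤ) (S : Set Site),
      (fun z => z + a • e) '' ((fun z => z + b • e) '' S)
        = (fun z => z + (b + a) • e) '' S := by
    intro a b S
    rw [Set.image_image]
    congr 1
    funext z
    rw [add_zsmul]
    abel
  have hslabshift : slab m' = (fun z => z + ((m' : ℤ) - m) • e) '' slab m := by
    have h1 : slab m' = (fun z => z + (m' : ℤ) • e) '' Q m' := by
      rw [hQ_def]
      simp only []
      rw [himage]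
      simp
    rw [h1, ← hQm, hQ_def]
    simp only []
    rw [himage]
    have : -(m : ℤ) + m' = (m' : ℤ) - m := by ring
    rw [this]
  set Y₁ : Set Site := bclosure U (H ∪ slab m) with hY₁_def
  have hY₁Y : Y₁ ⊆ Y := by
    refine bclosure_le U ?_
    rintro x (hx | hx)
    · exact subset_bclosure U _ (Or.inl hx)
    · exact hslabY m hx
  have hcval : ∀ k : ℕ, c k = cZ + (k : ℝ) * ε := fun k => rfl
  have hcm' : c m + W ≤ c m' := by
    have hcast : ((m : ℝ) + J) ≤ (m' : ℝ) := by exact_mod_cast hmm'.le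
    have hmul : ((m : ℝ) + J) * ε ≤ (m' : ℝ) * ε :=
      mul_le_mul_of_nonneg_right hcast hε.le
    have hWval : W = (J : ℝ) * ε := rfl
    rw [hcval, hcval, hWval]
    linarith
  have hslab' : slab m' ⊆ Y₁ := by
    intro z hz
    refine hkeyY m z (hslabY m' hz) ?_
    exact le_trans hcm' hz.2.2.1
  have hshiftY₁ : ∀ z ∈ Y₁, z + ((m' : ℤ) - m) • e ∈ Y₁ := by
    intro z hz
    have himg : z + ((m' : ℤ) - m) • e
        ∈ (fun w => w + ((m' : ℤ) - m) • e) '' Y₁ := ⟨z, hz, rfl⟩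
    rw [hY₁_def, ← bclosure_image_add, Set.image_union] at himg
    have hHtr : (fun w => w + ((m' : ℤ) - m) • e) '' H = H := by
      ext x
      rw [mem_image_add]
      simp only [hH_def, halfPlane, Set.mem_setOf_eq, ip_sub, ip_zsmul, he0,
        mul_zero, sub_zero]
    rw [hHtr, ← hslabshift] at himg
    refine (bclosure_le U ?_) himg
    rintro x (hx | hx)
    · exact subset_bclosure U _ (Or.inl hx)
    · exact hslab' hx
  -- the starting point on the line
  obtain ⟨j, hjY, hjbig⟩ : ∃ j : ℤ, (0 < j ∧ j • e ∈ Y) ∧ c m + W ≤ (j : ℝ) * ε := by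
    have h2 := hP.diff (Set.finite_Icc (0 : ℤ) ⌈(c m + W) / ε⌉)
    obtain ⟨j, hj⟩ := h2.nonempty
    refine ⟨j, hj.1, ?_⟩
    have hjN : ⌈(c m + W) / ε⌉ < j := by
      have h3 := hj.2
      simp only [Set.mem_Icc, not_and, not_le] at h3
      exact h3 hj.1.1.le
    have hdiv : (c m + W) / ε ≤ (⌈(c m + W) / ε⌉ : ℝ) := Int.le_ceil _
    have hNj : (⌈(c m + W) / ε⌉ : ℝ) ≤ (j : ℝ) := by exact_mod_cast hjN.le
    have := (div_le_iff₀ hε).1 (hdiv.trans hNj)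
    linarith
  have hbY₁ : j • e ∈ Y₁ := by
    refine hkeyY m _ hjY.2 ?_
    have hχj : χ (j • e) = (j : ℝ) * ε := by rw [hχzsmul, ← hε_def]
    rw [hχj]
    exact hjbig
  set p : ℕ := m' - m with hp_def
  have hppos : 0 < p := by omega
  have hpe : p • e = ((m' : ℤ) - m) • e := by
    rw [← natCast_zsmul e p]
    congr 1
    omega
  refine ⟨j • e, by rw [ip_zsmul, he0]; ring, p, hppos, ?_⟩
  have hmain : ∀ n : ℕ, j • e + n • (p • e) ∈ Y₁ := by
    intro n
    induction n with
    | zero => simpa using hbY₁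
    | succ n ih =>
        have hstep2 : j • e + (n + 1) • (p • e)
            = (j • e + n • (p • e)) + ((m' : ℤ) - m) • e := by
          rw [succ_nsmul, ← add_assoc, hpe]
        rw [hstep2]
        exact hshiftY₁ _ ih
  exact fun n => hY₁Y (hmain n)

end CoreAux

/-- **Semi-periodicity (Lemma 3.2).**  If `U` is critical with difficulty `α`, `u` is a
rational direction with `α(u) ≤ α`, and `Z` is voracious with respect to `u`, then
`[H_u ∪ Z] ∩ ℓ_u` contains a homothetic copy of `ℓ_u⁺` or of `ℓ_u⁻`. -/
theorem voracious_semiperiodic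
    (U : Finset (Finset Site)) (hU : ∀ X ∈ U, (0 : Site) ∉ X)
    (hcrit : Critical U) (u : ℝ × ℝ) (hu : unitVec u) (hur : RationalDir u)
    (hdiff : difficulty U u ≤ famDifficulty U)
    (Z : Finset Site) (hZcard : (Z.card : ℕ∞) ≤ difficulty U u)
    (hZvor : (bclosure U (halfPlane u ∪ ↑Z) ∩ line u).Infinite) :
    ∃ b : Site, b ∈ line u ∧ ∃ k : ℕ, 0 < k ∧
      ((∀ x ∈ linePlus u, b + k • x ∈ bclosure U (halfPlane u ∪ ↑Z) ∩ line u) ∨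
       (∀ x ∈ lineMinus u, b + k • x ∈ bclosure U (halfPlane u ∪ ↑Z) ∩ line u)) := by
  classical
  obtain ⟨e₀, he₀0, he₀1, hgen⟩ := exists_line_gen hu hur
  set Y : Set Site := bclosure U (halfPlane u ∪ ↑Z) with hYdef
  have hMinf : {m : ℤ | m • e₀ ∈ Y}.Infinite := by
    have hsub : Y ∩ line u ⊆ (fun m : ℤ => m • e₀) '' {m : ℤ | m • e₀ ∈ Y} := by
      rintro z ⟨hzY, hzl⟩
      obtain ⟨m, rfl⟩ := hgen z hzl
      exact ⟨m, hzY, rfl⟩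
    exact Set.Infinite.of_image _ (hZvor.mono hsub)
  have hsplit : {j : ℤ | 0 < j ∧ j • e₀ ∈ Y}.Infinite ∨
      {j : ℤ | 0 < j ∧ j • (-e₀) ∈ Y}.Infinite := by
    by_contra h
    push_neg at h
    refine hMinf (Set.Finite.subset
      ((h.1.union ((h.2.image Neg.neg).union (Set.finite_singleton (0 : ℤ)))))
      ?_)
    intro m hm
    rcases lt_trichotomy 0 m with hm0 | hm0 | hm0
    · exact Or.inl ⟨hm0, hm⟩
    · exact Or.inr (Or.inr (by simp [← hm0]))
    · refine Or.inr (Or.inl ⟨-m, ⟨by omega, ?_⟩, by simp⟩)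
      rw [neg_smul_neg]
      exact hm
  obtain ⟨e, he0, he1, hgen', hP⟩ :
      ∃ e : Site, ip e u = 0 ∧ ip e (rightPerp u) ≠ 0 ∧
        (∀ z : Site, ip z u = 0 → ∃ m : ℤ, z = m • e) ∧
        {j : ℤ | 0 < j ∧ j • e ∈ Y}.Infinite := by
    rcases hsplit with h | h
    · exact ⟨e₀, he₀0, he₀1, hgen, h⟩
    · refine ⟨-e₀, by rw [ip_neg, he₀0]; ring,
        by rw [ip_neg]; simpa using he₀1, ?_, h⟩
      intro z hz
      obtain ⟨m, rfl⟩ := hgen z hz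
      exact ⟨-m, by rw [neg_smul_neg]⟩
  obtain ⟨b, hb0, p, hp, hmem⟩ := core_progression U hu he0 he1 Z hP
  have hkx : ∀ m : ℤ, 0 ≤ m → p • (m • e) = m.toNat • (p • e) := by
    intro m hm0
    rw [← natCast_zsmul (m • e) p, smul_smul, ← natCast_zsmul e p,
      ← natCast_zsmul ((p : ℤ) • e) m.toNat, smul_smul]
    congr 1
    rw [Int.toNat_of_nonneg hm0]
    ring
  refine ⟨b, by simp only [line, Set.mem_setOf_eq]; exact hb0, p, hp, ?_⟩
  rcases lt_or_gt_of_ne he1 with hneg | hpos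
  · refine Or.inr ?_
    rintro x ⟨hx0, hx2⟩
    obtain ⟨m, rfl⟩ := hgen' x hx0
    have hm0 : 0 ≤ m := by
      by_contra hc
      push_neg at hc
      have hmr : (m : ℝ) < 0 := by exact_mod_cast hc
      have : 0 < ip (m • e) (rightPerp u) := by
        rw [ip_zsmul]
        exact mul_pos_of_neg_of_neg hmr hneg
      linarith
    refine ⟨?_, ?_⟩
    · rw [hkx m hm0]
      exact hmem m.toNat
    · show ip (b + p • m • e) u = 0
      rw [ip_add, hb0, ip_nsmul, ip_zsmul, he0]
      ring
  · refine Or.inl ?_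
    rintro x ⟨hx0, hx2⟩
    obtain ⟨m, rfl⟩ := hgen' x hx0
    have hm0 : 0 ≤ m := by
      by_contra hc
      push_neg at hc
      have hmr : (m : ℝ) < 0 := by exact_mod_cast hc
      have : ip (m • e) (rightPerp u) < 0 := by
        rw [ip_zsmul]
        exact mul_neg_of_neg_of_pos hmr hpos
      linarith
    refine ⟨?_, ?_⟩
    · rw [hkx m hm0]
      exact hmem m.toNat
    · show ip (b + p • m • e) u = 0
      rw [ip_add, hb0, ip_nsmul, ip_zsmul, he0]
      ring

end BP
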